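/- Rule 1 transfer step: let u = (u₀,u₁,u₂,u₃) ∈ ℝ⁴ with all coordinates nonnegative, and let v = (u₁, u₀+u₁, u₃, u₂). If u ≥ (φ^{e₀}, φ^{e₁}, φ^{e₂}, φ^{e₃}) coordinatewise for natural numbers e₀,…,e₃, then there exist natural numbers f₀,…,f₃ with v ≥ (φ^{f₀}, φ^{f₁}, φ^{f₂}, φ^{f₃}) coordinatewise and Φ(f) ≥ Φ(e) + 1, where Φ(x) = 2(x₁+x₂+x₃) − |{s ∈ {1,2,3} : x_s > x₀}|. -/

import Mathlib

noncomputable def goldenRatio' : ℝ := (1 + Real.sqrt 5) / 2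

/-- Ψ(x) = 2(x₁ + x₂ + x₃) for an exponent vector x ∈ ℕ⁴. -/
def Psi (x : Fin 4 → ℕ) : ℕ := 2 * (x 1 + x 2 + x 3)

/-- Φ(x) = Ψ(x) − |{s ∈ {1,2,3} : x_s > x₀}| for an exponent vector x ∈ ℕ⁴. -/
def Phi (x : Fin 4 → ℕ) : ℤ :=
  (Psi x : ℤ) - (({1, 2, 3} : Finset (Fin 4)).filter fun s => x 0 < x s).card

lemma gold_one_le' : (1:ℝ) ≤ goldenRatio' := by
  unfold goldenRatio'
  nlinarith [Real.sq_sqrt (by norm_num : (5:ℝ) ≥ 0), Real.sqrt_nonneg 5]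

lemma gold_le_two' : goldenRatio' ≤ 2 := by
  unfold goldenRatio'
  nlinarith [Real.sq_sqrt (by norm_num : (5:ℝ) ≥ 0), Real.sqrt_nonneg 5]

lemma gold_sq' : goldenRatio' ^ 2 = goldenRatio' + 1 := by
  unfold goldenRatio'
  nlinarith [Real.sq_sqrt (by norm_num : (5:ℝ) ≥ 0)]

lemma gold_pos' : (0:ℝ) < goldenRatio' := lt_of_lt_of_le one_pos gold_one_le'

lemma gold_pow_succ_le (n : ℕ) : goldenRatio' ^ (n+1) ≤ 2 * goldenRatio' ^ n := by
  rw [pow_succ, mul_comm]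
  exact mul_le_mul_of_nonneg_right gold_le_two' (pow_nonneg gold_pos'.le n)

lemma gold_pow_add2 (n : ℕ) :
    goldenRatio' ^ (n+2) = goldenRatio' ^ (n+1) + goldenRatio' ^ n := by
  have h : goldenRatio' ^ (n+2) = goldenRatio' ^ n * goldenRatio' ^ 2 := by ring
  rw [h, gold_sq']; ring

lemma gold_pow_mono {a b : ℕ} (h : a ≤ b) : goldenRatio' ^ a ≤ goldenRatio' ^ b :=
  pow_le_pow_right₀ gold_one_le' h

lemma card123 (P : Fin 4 → Prop) [DecidablePred P] :
    ((({1, 2, 3} : Finset (Fin 4)).filter P).card : ℤ)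
      = (if P 1 then 1 else 0) + (if P 2 then 1 else 0) + (if P 3 then 1 else 0) := by
  simp [Finset.filter_insert, Finset.filter_singleton]
  split_ifs <;> simp [Finset.card_insert_of_notMem]

theorem rule1_transfer_step (u : Fin 4 → ℝ) (hu : ∀ i, 0 ≤ u i)
    (e : Fin 4 → ℕ) (he : ∀ i, goldenRatio' ^ e i ≤ u i) :
    ∃ f : Fin 4 → ℕ,
      (∀ i, goldenRatio' ^ f i ≤ ![u 1, u 0 + u 1, u 3, u 2] i) ∧
      Phi e + 1 ≤ Phi f := by
  have h0 := he 0; have h1 := he 1; have h2 := he 2; have h3 := he 3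
  -- helper: any choice of the middle exponent works if φ^c ≤ u0 + u1
  have main : ∀ c : ℕ, goldenRatio' ^ c ≤ u 0 + u 1 →
      (∀ i, goldenRatio' ^ (![e 1, c, e 3, e 2]) i ≤ ![u 1, u 0 + u 1, u 3, u 2] i) := by
    intro c hc i
    fin_cases i <;> simpa using by first | exact h1 | exact hc | exact h3 | exact h2
  rcases lt_or_ge (e 0) (e 1) with hlt | hge
  · -- f = (e1, e1, e3, e2)
    refine ⟨![e 1, e 1, e 3, e 2], main _ (le_add_of_nonneg_left (hu 0) |>.trans' h1), ?_⟩
    simp only [Phi, card123]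
    simp only [Phi, Psi, card123, Matrix.cons_val_zero, Matrix.cons_val_one, Matrix.head_cons,
      Matrix.cons_val_two, Matrix.tail_cons, Matrix.cons_val_three]
    split_ifs <;> omega
  · rcases eq_or_lt_of_le hge with heq | hgt
    · -- e0 = e1 : f = (e1, e1+1, e3, e2)
      refine ⟨![e 1, e 1 + 1, e 3, e 2], main _ ?_, ?_⟩
      · calc goldenRatio' ^ (e 1 + 1) ≤ 2 * goldenRatio' ^ e 1 := gold_pow_succ_le _
          _ = goldenRatio' ^ e 1 + goldenRatio' ^ e 1 := by ring
          _ ≤ u 0 + u 1 := add_le_add (by rw [heq]; exact h0) h1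
      · simp only [Phi, card123]
        simp only [Phi, Psi, card123, Matrix.cons_val_zero, Matrix.cons_val_one, Matrix.head_cons,
          Matrix.cons_val_two, Matrix.tail_cons, Matrix.cons_val_three]
        split_ifs <;> omega
    · by_cases he01 : e 0 = e 1 + 1
      · -- f = (e1, e1+2, e3, e2)
        refine ⟨![e 1, e 1 + 2, e 3, e 2], main _ ?_, ?_⟩
        · rw [gold_pow_add2, ← he01]
          exact add_le_add h0 h1
        · simp only [Phi, card123]
          simp only [Phi, Psi, card123, Matrix.cons_val_zero, Matrix.cons_val_one,
            Matrix.head_cons, Matrix.cons_val_two, Matrix.tail_cons, Matrix.cons_val_three]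
          split_ifs <;> omega
      · -- e0 ≥ e1 + 2 : f = (e1, e0, e3, e2)
        have hge2 : e 1 + 2 ≤ e 0 := by omega
        refine ⟨![e 1, e 0, e 3, e 2], main _ (le_add_of_nonneg_right (hu 1) |>.trans' h0), ?_⟩
        simp only [Phi, card123]
        simp only [Phi, Psi, card123, Matrix.cons_val_zero, Matrix.cons_val_one, Matrix.head_cons,
          Matrix.cons_val_two, Matrix.tail_cons, Matrix.cons_val_three]
        split_ifs <;> omega
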